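/- arXiv:1001.3252 — 2 statements merged into one kernel-verified Lean document; each statement's English description precedes it below -/
import Mathlib

section
/- (Uniform Exterior Sphere property of 𝒟_{ij} on 𝒜_g^σ.) Let n ≥ 2 be an integer, σ > 0, 0 < r_- < r_+, and i ≠ j indices in {1,…,n}. Set α = r_-√(2+2σ²). Then for every 𝐱 ∈ 𝒜_g^σ with |x_i−x_j| = σ(x̌_i+x̌_j), the open ball of radius α centered at 𝐱 − α·𝐧_{ij}(𝐱) in (ℝ³×ℝ)^n is disjoint from 𝒟_{ij}. -/
open scoped RealInnerProductSpace

noncomputable section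

/-- A globule: a point of `ℝ³ × ℝ` with the Euclidean (L²) norm;
the first component is the center, the second the radius. -/
abbrev Glob : Type := WithLp 2 (EuclideanSpace ℝ (Fin 3) × ℝ)

/-- The configuration space of `n` globules, `(ℝ³ × ℝ)ⁿ` with the Euclidean norm. -/
abbrev Conf (n : ℕ) : Type := PiLp 2 (fun _ : Fin n => Glob)

/-- The center of the `i`-th globule. -/
def ctr {n : ℕ} (x : Conf n) (i : Fin n) : EuclideanSpace ℝ (Fin 3) :=
  (WithLp.equiv 2 (EuclideanSpace ℝ (Fin 3) × ℝ) (x i)).1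

/-- The radius of the `i`-th globule. -/
def rad {n : ℕ} (x : Conf n) (i : Fin n) : ℝ :=
  (WithLp.equiv 2 (EuclideanSpace ℝ (Fin 3) × ℝ) (x i)).2

/-- The vector `𝐰` at a configuration `x`: its `i`-th center component is
`(x_i - x_j)/(σ(x̌_i + x̌_j))`, its `j`-th center component is the opposite,
its radius components at `i` and `j` are `-σ`, all other components vanish. -/
def wvec (σ : ℝ) {n : ℕ} (i j : Fin n) (x : Conf n) : Conf n := WithLp.toLp 2 fun k =>
  (WithLp.equiv 2 (EuclideanSpace ℝ (Fin 3) × ℝ)).symm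
    (if k = i then (σ * (rad x i + rad x j))⁻¹ • (ctr x i - ctr x j)
      else if k = j then (σ * (rad x i + rad x j))⁻¹ • (ctr x j - ctr x i)
      else 0,
     if k = i ∨ k = j then -σ else 0)

/-- The inward normal vector `𝐧_{ij}(x) = 𝐰/√(2+2σ²)`. -/
def nvec (σ : ℝ) {n : ℕ} (i j : Fin n) (x : Conf n) : Conf n :=
  (Real.sqrt (2 + 2 * σ ^ 2))⁻¹ • wvec σ i j x

/-- The set `𝒟_{ij} = {𝐱 : |x_i - x_j| ≥ σ(x̌_i + x̌_j)}`. -/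
def Dset (σ : ℝ) {n : ℕ} (i j : Fin n) : Set (Conf n) :=
  {x | σ * (rad x i + rad x j) ≤ ‖ctr x i - ctr x j‖}

/-- The set `𝒜_g^σ` of allowed (rescaled) configurations. -/
def AgSet (σ rm rp : ℝ) (n : ℕ) : Set (Conf n) :=
  {x | (∀ i, rm / σ ≤ rad x i ∧ rad x i ≤ rp / σ) ∧
    ∀ i j : Fin n, i ≠ j → σ * (rad x i + rad x j) ≤ ‖ctr x i - ctr x j‖}

/-- The function `f(𝐱) = |x_i - x_j| - σ(x̌_i + x̌_j)`. -/
def fij (σ : ℝ) {n : ℕ} (i j : Fin n) (x : Conf n) : ℝ :=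
  ‖ctr x i - ctr x j‖ - σ * (rad x i + rad x j)

end

private lemma ctr_sub' {n : ℕ} (a b : Conf n) (k : Fin n) :
    ctr (a - b) k = ctr a k - ctr b k := rfl

private lemma rad_sub' {n : ℕ} (a b : Conf n) (k : Fin n) :
    rad (a - b) k = rad a k - rad b k := rfl

private lemma glob_norm_sq {n : ℕ} (z : Conf n) (k : Fin n) :
    ‖z k‖ ^ 2 = ‖ctr z k‖ ^ 2 + |rad z k| ^ 2 := by
  rw [WithLp.prod_norm_sq_eq_of_L2]; simp [ctr, rad, sq_abs]

set_option maxHeartbeats 1000000 in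
theorem statement2 (n : ℕ) (hn : 2 ≤ n) (σ : ℝ) (hσ : 0 < σ) (rm rp : ℝ)
    (hrm : 0 < rm) (hrmp : rm < rp) (i j : Fin n) (hij : i ≠ j)
    (x : Conf n) (hx : x ∈ AgSet σ rm rp n)
    (hc : ‖ctr x i - ctr x j‖ = σ * (rad x i + rad x j)) :
    Metric.ball (x - (rm * Real.sqrt (2 + 2 * σ ^ 2)) • nvec σ i j x)
        (rm * Real.sqrt (2 + 2 * σ ^ 2)) ∩ Dset σ i j = ∅ := by
  set s : ℝ := σ * (rad x i + rad x j) with hs_def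
  set t : ℝ := 2 + 2 * σ ^ 2 with ht_def
  have ht : (0:ℝ) < t := by positivity
  have hsq : Real.sqrt t ^ 2 = t := Real.sq_sqrt ht.le
  have hsq0 : (0:ℝ) < Real.sqrt t := Real.sqrt_pos.mpr ht
  set α : ℝ := rm * Real.sqrt t with hα_def
  have hα : 0 < α := by positivity
  -- the center of the ball equals x - rm • wvec
  have hcenter : x - α • nvec σ i j x = x - rm • wvec σ i j x := by
    rw [nvec, smul_smul, hα_def, mul_assoc, mul_inv_cancel₀ hsq0.ne', mul_one]
  set c : Conf n := x - rm • wvec σ i j x with hc_def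
  -- bounds on radii
  have hradi : rm / σ ≤ rad x i := (hx.1 i).1
  have hradj : rm / σ ≤ rad x j := (hx.1 j).1
  have h2rm : 2 * rm ≤ s := by
    have : rm / σ + rm / σ ≤ rad x i + rad x j := add_le_add hradi hradj
    calc 2 * rm = σ * (rm / σ + rm / σ) := by field_simp; ring
    _ ≤ s := by rw [hs_def]; exact mul_le_mul_of_nonneg_left this hσ.le
  have hs0 : 0 < s := lt_of_lt_of_le (by positivity) h2rm
  -- components of c
  have hci : ctr c i = ctr x i - (rm * s⁻¹) • (ctr x i - ctr x j) := by
    rw [hc_def, ctr_sub']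
    have : ctr (rm • wvec σ i j x) i = rm • (s⁻¹ • (ctr x i - ctr x j)) := by
      show rm • ctr (wvec σ i j x) i = _
      congr 1
      simp [ctr, wvec]
      rw [hs_def, mul_inv_rev]
    rw [this, smul_smul]
  have hcj : ctr c j = ctr x j + (rm * s⁻¹) • (ctr x i - ctr x j) := by
    rw [hc_def, ctr_sub']
    have : ctr (rm • wvec σ i j x) j = rm • (s⁻¹ • (ctr x j - ctr x i)) := by
      show rm • ctr (wvec σ i j x) j = _
      congr 1
      simp [ctr, wvec, hij.symm]
      rw [hs_def, mul_inv_rev]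
    rw [this, smul_smul, smul_sub, smul_sub, sub_eq_add_neg, neg_sub]
  have hri : rad c i = rad x i + rm * σ := by
    rw [hc_def, rad_sub']
    have : rad (rm • wvec σ i j x) i = rm * (-σ) := by
      show rm * rad (wvec σ i j x) i = _
      congr 1
      simp [rad, wvec]
    rw [this]; ring
  have hrj : rad c j = rad x j + rm * σ := by
    rw [hc_def, rad_sub']
    have : rad (rm • wvec σ i j x) j = rm * (-σ) := by
      show rm * rad (wvec σ i j x) j = _
      congr 1
      simp [rad, wvec]
    rw [this]; ring
  -- distance between centers of c
  have hcc : ‖ctr c i - ctr c j‖ = s - 2 * rm := by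
    have : ctr c i - ctr c j = (1 - 2 * (rm * s⁻¹)) • (ctr x i - ctr x j) := by
      rw [hci, hcj]; module
    have h1 : 0 ≤ 1 - 2 * (rm * s⁻¹) := by
      rw [sub_nonneg, show 2 * (rm * s⁻¹) = (2 * rm) / s by ring]
      exact (div_le_one hs0).mpr h2rm
    rw [this, norm_smul, hc, Real.norm_eq_abs, abs_of_nonneg h1]
    field_simp
  -- main argument
  rw [Set.eq_empty_iff_forall_notMem]
  rintro y ⟨hy1, hy2⟩
  rw [Metric.mem_ball, dist_eq_norm, hcenter] at hy1
  set z : Conf n := y - c with hz_def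
  have hyi : ctr y i = ctr c i + ctr z i := eq_add_of_sub_eq' (ctr_sub' y c i).symm
  have hyj : ctr y j = ctr c j + ctr z j := eq_add_of_sub_eq' (ctr_sub' y c j).symm
  have hyri : rad y i = rad c i + rad z i := eq_add_of_sub_eq' (rad_sub' y c i).symm
  have hyrj : rad y j = rad c j + rad z j := eq_add_of_sub_eq' (rad_sub' y c j).symm
  set A := ‖ctr z i‖ with hA
  set B := ‖ctr z j‖ with hB
  set C := |rad z i| with hC
  set E := |rad z j| with hE
  -- norm bound
  have hzsum : ‖z i‖ ^ 2 + ‖z j‖ ^ 2 ≤ ‖z‖ ^ 2 := by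
    rw [PiLp.norm_sq_eq_of_L2]
    have : ‖z i‖ ^ 2 + ‖z j‖ ^ 2 = ∑ k ∈ ({i, j} : Finset (Fin n)), ‖z k‖ ^ 2 := by
      rw [Finset.sum_pair hij]
    rw [this]
    exact Finset.sum_le_sum_of_subset_of_nonneg (Finset.subset_univ _)
      (fun k _ _ => by positivity)
  have hz_lt : ‖z‖ < α := hy1
  have hsum_sq : A ^ 2 + C ^ 2 + (B ^ 2 + E ^ 2) < α ^ 2 := by
    calc A ^ 2 + C ^ 2 + (B ^ 2 + E ^ 2) = ‖z i‖ ^ 2 + ‖z j‖ ^ 2 := by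
          rw [glob_norm_sq, glob_norm_sq]
    _ ≤ ‖z‖ ^ 2 := hzsum
    _ < α ^ 2 := pow_lt_pow_left₀ hz_lt (norm_nonneg z) (by norm_num)
  have hα2 : α ^ 2 = rm ^ 2 * t := by rw [hα_def, mul_pow, hsq]
  -- Cauchy–Schwarz step
  have hkey : A + B + σ * C + σ * E < 2 * rm * (1 + σ ^ 2) := by
    have hAn : 0 ≤ A := norm_nonneg _
    have hBn : 0 ≤ B := norm_nonneg _
    have hCn : 0 ≤ C := abs_nonneg _
    have hEn : 0 ≤ E := abs_nonneg _
    have hcs : (A + B + σ * C + σ * E) ^ 2 ≤ t * (A ^ 2 + C ^ 2 + (B ^ 2 + E ^ 2)) := by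
      have hid : t * (A ^ 2 + C ^ 2 + (B ^ 2 + E ^ 2)) - (A + B + σ * C + σ * E) ^ 2 =
          (A - B) ^ 2 + (C - σ * A) ^ 2 + (E - σ * A) ^ 2 + (C - σ * B) ^ 2 +
          (E - σ * B) ^ 2 + (σ * C - σ * E) ^ 2 := by rw [ht_def]; ring
      linarith [sq_nonneg (A - B), sq_nonneg (C - σ * A), sq_nonneg (E - σ * A),
        sq_nonneg (C - σ * B), sq_nonneg (E - σ * B), sq_nonneg (σ * C - σ * E)]
    have hlt : (A + B + σ * C + σ * E) ^ 2 < (2 * rm * (1 + σ ^ 2)) ^ 2 := by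
      calc (A + B + σ * C + σ * E) ^ 2 ≤ t * (A ^ 2 + C ^ 2 + (B ^ 2 + E ^ 2)) := hcs
      _ < t * α ^ 2 := by exact mul_lt_mul_of_pos_left hsum_sq ht
      _ = (2 * rm * (1 + σ ^ 2)) ^ 2 := by rw [hα2, ht_def]; ring
    exact lt_of_pow_lt_pow_left₀ 2 (by positivity) hlt
  -- conclude
  have hnorm_y : ‖ctr y i - ctr y j‖ ≤ (s - 2 * rm) + A + B := by
    have : ctr y i - ctr y j = (ctr c i - ctr c j) + (ctr z i - ctr z j) := by
      rw [hyi, hyj]; abel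
    rw [this]
    calc ‖(ctr c i - ctr c j) + (ctr z i - ctr z j)‖
        ≤ ‖ctr c i - ctr c j‖ + ‖ctr z i - ctr z j‖ := norm_add_le _ _
    _ ≤ ‖ctr c i - ctr c j‖ + (A + B) := by
        exact add_le_add_right (norm_sub_le (ctr z i) (ctr z j)) _
    _ = (s - 2 * rm) + A + B := by rw [hcc]; ring
  have hrad_y : s + 2 * rm * σ ^ 2 - σ * C - σ * E ≤ σ * (rad y i + rad y j) := by
    have h1 : -C ≤ rad z i := neg_abs_le _
    have h2 : -E ≤ rad z j := neg_abs_le _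
    have : rad y i + rad y j = (rad x i + rad x j) + 2 * rm * σ + (rad z i + rad z j) := by
      rw [hyri, hyrj, hri, hrj]; ring
    rw [this]
    have g1 : σ * (-C) ≤ σ * rad z i := mul_le_mul_of_nonneg_left h1 hσ.le
    have g2 : σ * (-E) ≤ σ * rad z j := mul_le_mul_of_nonneg_left h2 hσ.le
    have hexp : σ * ((rad x i + rad x j) + 2 * rm * σ + (rad z i + rad z j)) =
        s + 2 * rm * σ ^ 2 + σ * rad z i + σ * rad z j := by rw [hs_def]; ring
    rw [hexp]
    linarith
  have hfinal : ‖ctr y i - ctr y j‖ < σ * (rad y i + rad y j) := by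
    calc ‖ctr y i - ctr y j‖ ≤ (s - 2 * rm) + A + B := hnorm_y
    _ < s + 2 * rm * σ ^ 2 - σ * C - σ * E := by
        have : 2 * rm * (1 + σ ^ 2) = 2 * rm + 2 * rm * σ ^ 2 := by ring
        linarith
    _ ≤ σ * (rad y i + rad y j) := hrad_y
  exact absurd hy2 (by rw [Dset]; simp only [Set.mem_setOf_eq]; linarith)
end

section
/- Let n ≥ 2 be an integer, σ > 0, 0 < r_- < r_+, and i ≠ j indices in {1,…,n}. For all 𝐱, 𝐲 ∈ 𝒜_g^σ with |x_i−x_j| = σ(x̌_i+x̌_j) and |y_i−y_j| = σ(y̌_i+y̌_j), one has ⟨𝐧_{ij}(𝐱), 𝐧_{ij}(𝐲)⟩ ≥ 1 − (√2 / (r_-(1+σ²))) · ‖𝐱 − 𝐲‖. -/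
open scoped RealInnerProductSpace

-- unit vector difference bound
lemma aux_unit {E : Type*} [NormedAddCommGroup E] [InnerProductSpace ℝ E]
    (a b : E) (ha : a ≠ 0) (hb : b ≠ 0) :
    1 - ⟪‖a‖⁻¹ • a, ‖b‖⁻¹ • b⟫ ≤ 2 * ‖a - b‖ / ‖a‖ := by
  set u := ‖a‖⁻¹ • a
  set v := ‖b‖⁻¹ • b
  have hu : ‖u‖ = 1 := norm_smul_inv_norm ha
  have hv : ‖v‖ = 1 := norm_smul_inv_norm hb
  have hapos : (0:ℝ) < ‖a‖ := norm_pos_iff.2 ha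
  have hbpos : (0:ℝ) < ‖b‖ := norm_pos_iff.2 hb
  have h1 : 1 - ⟪u, v⟫ ≤ ‖u - v‖ := by
    have : ⟪u, u - v⟫ ≤ ‖u‖ * ‖u - v‖ := real_inner_le_norm _ _
    rw [inner_sub_right, real_inner_self_eq_norm_sq, hu] at this
    simpa using this
  have h2 : ‖u - v‖ ≤ 2 * ‖a - b‖ / ‖a‖ := by
    have hdecomp : u - v = ‖a‖⁻¹ • (a - b) + (‖a‖⁻¹ - ‖b‖⁻¹) • b := by
      simp only [u, v, smul_sub, sub_smul]
      abel
    have hterm2 : ‖(‖a‖⁻¹ - ‖b‖⁻¹) • b‖ ≤ ‖a - b‖ / ‖a‖ := by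
      rw [norm_smul, Real.norm_eq_abs]
      have key : ‖a‖⁻¹ - ‖b‖⁻¹ = (‖b‖ - ‖a‖) / (‖a‖ * ‖b‖) := by
        field_simp
      have hle : |‖b‖ - ‖a‖| ≤ ‖a - b‖ := by
        rw [abs_sub_comm]; exact abs_norm_sub_norm_le a b
      rw [key, abs_div, abs_of_pos (by positivity : (0:ℝ) < ‖a‖ * ‖b‖)]
      rw [div_mul_eq_mul_div, mul_comm ‖a‖ ‖b‖, ← div_div,
        mul_div_assoc, div_self hbpos.ne', mul_one]
      gcongr
    calc ‖u - v‖ ≤ ‖‖a‖⁻¹ • (a - b)‖ + ‖(‖a‖⁻¹ - ‖b‖⁻¹) • b‖ := by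
          rw [hdecomp]; exact norm_add_le _ _
      _ ≤ ‖a - b‖ / ‖a‖ + ‖a - b‖ / ‖a‖ := by
          gcongr
          rw [norm_smul, Real.norm_eq_abs, abs_of_pos (by positivity),
            inv_mul_eq_div]
      _ = 2 * ‖a - b‖ / ‖a‖ := by ring
  linarith

lemma aux_inner_wvec (σ : ℝ) {n : ℕ} (i j : Fin n) (hij : i ≠ j) (x y : Conf n) :
    ⟪wvec σ i j x, wvec σ i j y⟫ =
      2 * ⟪(σ * (rad x i + rad x j))⁻¹ • (ctr x i - ctr x j),
           (σ * (rad y i + rad y j))⁻¹ • (ctr y i - ctr y j)⟫ + 2 * σ ^ 2 := by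
  classical
  rw [PiLp.inner_apply]
  rw [← Finset.sum_subset (Finset.subset_univ ({i, j} : Finset (Fin n)))
    (fun k _ hk => ?_)]
  · rw [Finset.sum_pair hij]
    have hji : j ≠ i := hij.symm
    simp only [wvec, WithLp.prod_inner_apply, PiLp.toLp_apply, WithLp.equiv_symm_apply, WithLp.toLp_fst,
      WithLp.toLp_snd, if_pos rfl, if_neg hji, eq_self_iff_true,
      if_true, true_or, or_true, RCLike.inner_apply, conj_trivial]
    have e1 : ctr x j - ctr x i = -(ctr x i - ctr x j) := by abel
    have e2 : ctr y j - ctr y i = -(ctr y i - ctr y j) := by abel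
    rw [e1, e2, smul_neg, smul_neg, inner_neg_neg]
    ring
  · have hk1 : k ≠ i := by
      intro h; exact hk (by simp [h])
    have hk2 : k ≠ j := by
      intro h; exact hk (by simp [h])
    simp only [wvec, WithLp.prod_inner_apply, PiLp.toLp_apply, WithLp.equiv_symm_apply, WithLp.toLp_fst,
      WithLp.toLp_snd, if_neg hk1, if_neg hk2]
    simp [hk1, hk2]

lemma aux_ctr_sub {n : ℕ} (x y : Conf n) (k : Fin n) :
    ctr (x - y) k = ctr x k - ctr y k := rfl

lemma aux_norm_ctr_le {n : ℕ} (z : Conf n) (k : Fin n) : ‖ctr z k‖ ≤ ‖z‖ := by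
  have h1 : ‖ctr z k‖ ^ 2 ≤ ‖z k‖ ^ 2 := by
    rw [WithLp.prod_norm_sq_eq_of_L2]
    have : ctr z k = (z k).fst := rfl
    rw [this]
    nlinarith [norm_nonneg (z k).snd]
  have h2 : ‖z k‖ ^ 2 ≤ ‖z‖ ^ 2 := by
    rw [PiLp.norm_sq_eq_of_L2]
    have := Finset.single_le_sum (f := fun l => ‖z l‖ ^ 2)
      (fun l _ => by positivity) (Finset.mem_univ k)
    simpa using this
  have := h1.trans h2
  calc ‖ctr z k‖ = Real.sqrt (‖ctr z k‖ ^ 2) := (Real.sqrt_sq (norm_nonneg _)).symm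
    _ ≤ Real.sqrt (‖z‖ ^ 2) := Real.sqrt_le_sqrt this
    _ = ‖z‖ := Real.sqrt_sq (norm_nonneg _)

set_option maxHeartbeats 1000000 in
theorem statement6 (n : ℕ) (hn : 2 ≤ n) (σ : ℝ) (hσ : 0 < σ) (rm rp : ℝ)
    (hrm : 0 < rm) (hrmp : rm < rp) (i j : Fin n) (hij : i ≠ j)
    (x y : Conf n) (hx : x ∈ AgSet σ rm rp n) (hy : y ∈ AgSet σ rm rp n)
    (hcx : ‖ctr x i - ctr x j‖ = σ * (rad x i + rad x j))
    (hcy : ‖ctr y i - ctr y j‖ = σ * (rad y i + rad y j)) :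
    ⟪nvec σ i j x, nvec σ i j y⟫ ≥
      1 - Real.sqrt 2 / (rm * (1 + σ ^ 2)) * ‖x - y‖ := by
  classical
  -- setup
  set a := ctr x i - ctr x j with ha
  set b := ctr y i - ctr y j with hb
  have hσ2 : (0:ℝ) < 1 + σ ^ 2 := by positivity
  have hxa : rm / σ ≤ rad x i := (hx.1 i).1
  have hxb : rm / σ ≤ rad x j := (hx.1 j).1
  have hya : rm / σ ≤ rad y i := (hy.1 i).1
  have hyb : rm / σ ≤ rad y j := (hy.1 j).1
  have hna : 2 * rm ≤ ‖a‖ := by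
    rw [hcx]
    have : 2 * rm = σ * (rm / σ + rm / σ) := by field_simp; ring
    rw [this]
    have : rm / σ + rm / σ ≤ rad x i + rad x j := by linarith
    nlinarith
  have hnb : 2 * rm ≤ ‖b‖ := by
    rw [hcy]
    have : 2 * rm = σ * (rm / σ + rm / σ) := by field_simp; ring
    rw [this]
    have : rm / σ + rm / σ ≤ rad y i + rad y j := by linarith
    nlinarith
  have hapos : (0:ℝ) < ‖a‖ := lt_of_lt_of_le (by positivity) hna
  have hbpos : (0:ℝ) < ‖b‖ := lt_of_lt_of_le (by positivity) hnb
  have ha0 : a ≠ 0 := by intro h; rw [h, norm_zero] at hapos; linarith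
  have hb0 : b ≠ 0 := by intro h; rw [h, norm_zero] at hbpos; linarith
  -- inner product of nvecs
  have hinner : ⟪nvec σ i j x, nvec σ i j y⟫ =
      (2 * ⟪‖a‖⁻¹ • a, ‖b‖⁻¹ • b⟫ + 2 * σ ^ 2) / (2 + 2 * σ ^ 2) := by
    rw [nvec, nvec, real_inner_smul_left, real_inner_smul_right,
      aux_inner_wvec σ i j hij x y, ← hcx, ← hcy, ← ha, ← hb]
    have hs : Real.sqrt (2 + 2 * σ ^ 2) ^ 2 = 2 + 2 * σ ^ 2 :=
      Real.sq_sqrt (by positivity)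
    have hspos : (0:ℝ) < Real.sqrt (2 + 2 * σ ^ 2) :=
      Real.sqrt_pos.2 (by positivity)
    field_simp
    rw [Real.sq_sqrt (by positivity)]
  -- bound ‖a - b‖ by √2 ‖x - y‖
  have hd : ‖a - b‖ ≤ Real.sqrt 2 * ‖x - y‖ := by
    set d := x - y with hdd
    have hab : a - b = ctr d i - ctr d j := by
      rw [ha, hb]
      rw [aux_ctr_sub x y i, aux_ctr_sub x y j]
      abel
    have h1 : ‖a - b‖ ≤ ‖ctr d i‖ + ‖ctr d j‖ := by
      rw [hab]; exact norm_sub_le _ _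
    have h2 : ‖ctr d i‖ ^ 2 + ‖ctr d j‖ ^ 2 ≤ ‖d‖ ^ 2 := by
      have hi2 : ‖ctr d i‖ ^ 2 ≤ ‖d i‖ ^ 2 := by
        rw [WithLp.prod_norm_sq_eq_of_L2]
        have : ctr d i = (d i).fst := rfl
        rw [this]; nlinarith [norm_nonneg (d i).snd]
      have hj2 : ‖ctr d j‖ ^ 2 ≤ ‖d j‖ ^ 2 := by
        rw [WithLp.prod_norm_sq_eq_of_L2]
        have : ctr d j = (d j).fst := rfl
        rw [this]; nlinarith [norm_nonneg (d j).snd]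
      have hsum : ‖d i‖ ^ 2 + ‖d j‖ ^ 2 ≤ ‖d‖ ^ 2 := by
        rw [PiLp.norm_sq_eq_of_L2]
        rw [← Finset.sum_pair hij (f := fun l => ‖d l‖ ^ 2)]
        exact Finset.sum_le_sum_of_subset_of_nonneg (Finset.subset_univ _)
          (fun l _ _ => by positivity)
      linarith
    have h3 : (‖ctr d i‖ + ‖ctr d j‖) ^ 2 ≤ 2 * ‖d‖ ^ 2 := by
      nlinarith [sq_nonneg (‖ctr d i‖ - ‖ctr d j‖)]
    have h4 : ‖a - b‖ ^ 2 ≤ (Real.sqrt 2 * ‖d‖) ^ 2 := by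
      have : (Real.sqrt 2 * ‖d‖) ^ 2 = 2 * ‖d‖ ^ 2 := by
        rw [mul_pow, Real.sq_sqrt (by norm_num : (2:ℝ) ≥ 0)]
      rw [this]
      nlinarith [norm_nonneg (a - b), norm_nonneg (ctr d i), norm_nonneg (ctr d j)]
    calc ‖a - b‖ = Real.sqrt (‖a - b‖ ^ 2) := (Real.sqrt_sq (norm_nonneg _)).symm
      _ ≤ Real.sqrt ((Real.sqrt 2 * ‖d‖) ^ 2) := Real.sqrt_le_sqrt h4
      _ = Real.sqrt 2 * ‖d‖ := Real.sqrt_sq (by positivity)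
  -- key scalar bound
  have hkey : 1 - ⟪‖a‖⁻¹ • a, ‖b‖⁻¹ • b⟫ ≤ Real.sqrt 2 * ‖x - y‖ / rm := by
    have h1 := aux_unit a b ha0 hb0
    have h2 : 2 * ‖a - b‖ / ‖a‖ ≤ 2 * ‖a - b‖ / (2 * rm) :=
      div_le_div_of_nonneg_left (by positivity) (by positivity) hna
    have h3 : 2 * ‖a - b‖ / (2 * rm) = ‖a - b‖ / rm := by
      field_simp
    have h4 : ‖a - b‖ / rm ≤ Real.sqrt 2 * ‖x - y‖ / rm := by gcongr
    linarith
  -- conclude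
  rw [hinner, ge_iff_le]
  set t := ⟪‖a‖⁻¹ • a, ‖b‖⁻¹ • b⟫ with htdef
  set s := ‖x - y‖ with hsdef
  have heq : (2 * t + 2 * σ ^ 2) / (2 + 2 * σ ^ 2) = 1 - (1 - t) / (1 + σ ^ 2) := by
    field_simp
    ring
  rw [heq]
  have h5 : (1 - t) / (1 + σ ^ 2) ≤ (Real.sqrt 2 * s / rm) / (1 + σ ^ 2) := by
    gcongr
  have h6 : (Real.sqrt 2 * s / rm) / (1 + σ ^ 2) =
      Real.sqrt 2 / (rm * (1 + σ ^ 2)) * s := by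
    field_simp
  linarith [h6 ▸ h5]
end
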